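/- arXiv:2112.09465 — 2 statements merged into one kernel-verified Lean document; each statement's English description precedes it below -/
import Mathlib

section
/- Let κ, θ, σ > 0 with α := (4κθ − σ²)/8 ≥ 0, let T > 0, let N ∈ ℕ, and let h : ℕ → ℝ be a sequence of strictly positive step sizes with ∑_{i=1}^{N} h(i) ≤ T. On a probability space (Ω, F, ℙ) let (ξ_n)_{n∈ℕ} be an independent family of real random variables with ξ_n distributed as the Gaussian measure with mean 0 and variance h(n+1). Define recursively X_0 = x₀ for a constant x₀ ≥ 0 and X_{n+1} = e^{−κ h(n+1)} (√(X_n + 2α h(n+1)) + (σ/2) ξ_n)². Then for every n ≤ N, X_n is nonnegative and integrable and E[X_n] ≤ x₀ + κθT. -/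
open MeasureTheory ProbabilityTheory

open Real Filter Topology
open scoped NNReal ENNReal

lemma my_integral_odd_gauss {b : ℝ} : ∫ x : ℝ, x * rexp (-b * x ^ 2) = 0 := by
  have h1 : ∫ x : ℝ, -x * rexp (-b * (-x) ^ 2) = ∫ x : ℝ, x * rexp (-b * x ^ 2) :=
    integral_neg_eq_self (fun x => x * rexp (-b * x ^ 2)) volume
  have h2 : (fun x : ℝ => -x * rexp (-b * (-x) ^ 2)) = fun x => -(x * rexp (-b * x ^ 2)) := by
    funext x; ring_nf
  rw [h2, integral_neg] at h1
  linarith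

lemma my_integrable_sq_exp {b : ℝ} (hb : 0 < b) :
    Integrable fun x : ℝ => x ^ 2 * rexp (-b * x ^ 2) := by
  have h := integrable_rpow_mul_exp_neg_mul_sq hb (s := 2) (by norm_num)
  have he : (fun x : ℝ => x ^ (2 : ℝ) * rexp (-b * x ^ 2))
      = fun x : ℝ => x ^ 2 * rexp (-b * x ^ 2) := by
    funext x
    rw [show (2 : ℝ) = ((2 : ℕ) : ℝ) by norm_num, Real.rpow_natCast]
  rwa [he] at h

lemma my_integral_sq_exp {b : ℝ} (hb : 0 < b) :
    ∫ x : ℝ, x ^ 2 * rexp (-b * x ^ 2) = √(π / b) / (2 * b) := by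
  have hb' : (2 : ℝ) * b ≠ 0 := by positivity
  set F : ℝ → ℝ := fun x => -(2 * b)⁻¹ * (x * rexp (-b * x ^ 2)) with hFdef
  have hF : ∀ x : ℝ, HasDerivAt F
      (x ^ 2 * rexp (-b * x ^ 2) - (2 * b)⁻¹ * rexp (-b * x ^ 2)) x := by
    intro x
    have h1 : HasDerivAt (fun y : ℝ => -b * y ^ 2) (-b * (2 * x)) x := by
      simpa using (hasDerivAt_pow 2 x).const_mul (-b)
    have h2 := ((hasDerivAt_id x).mul h1.exp).const_mul (-(2 * b)⁻¹)
    refine h2.congr_deriv ?_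
    simp only [id]
    field_simp
    ring
  have hdecay : Tendsto (fun x : ℝ => x * rexp (-b * x ^ 2)) atTop (𝓝 0) := by
    have hlo := rpow_mul_exp_neg_mul_sq_isLittleO_exp_neg hb 1
    simp only [Real.rpow_one] at hlo
    refine hlo.trans_tendsto ?_
    exact Real.tendsto_exp_atBot.comp (tendsto_id.const_mul_atTop_of_neg (by norm_num))
  have htend : Tendsto F atTop (𝓝 0) := by
    have h := hdecay.const_mul (-(2 * b)⁻¹)
    rw [mul_zero] at h
    exact h
  have hint1 : Integrable fun x : ℝ => rexp (-b * x ^ 2) := integrable_exp_neg_mul_sq hb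
  have hintsub : Integrable fun x : ℝ =>
      x ^ 2 * rexp (-b * x ^ 2) - (2 * b)⁻¹ * rexp (-b * x ^ 2) :=
    (my_integrable_sq_exp hb).sub (hint1.const_mul _)
  have key : ∫ x in Set.Ioi (0 : ℝ),
      (x ^ 2 * rexp (-b * x ^ 2) - (2 * b)⁻¹ * rexp (-b * x ^ 2)) = 0 - F 0 :=
    integral_Ioi_of_hasDerivAt_of_tendsto' (fun x _ => hF x) hintsub.integrableOn htend
  have hF0 : F 0 = 0 := by simp [hFdef]
  rw [hF0, sub_zero,
    integral_sub (my_integrable_sq_exp hb).integrableOn (hint1.const_mul _).integrableOn] at key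
  have hIoi : ∫ x in Set.Ioi (0 : ℝ), x ^ 2 * rexp (-b * x ^ 2)
      = (2 * b)⁻¹ * (√(π / b) / 2) := by
    have hg : ∫ x in Set.Ioi (0 : ℝ), (2 * b)⁻¹ * rexp (-b * x ^ 2)
        = (2 * b)⁻¹ * (√(π / b) / 2) := by
      rw [integral_const_mul, integral_gaussian_Ioi]
    linarith [key, hg]
  have habs : ∫ x : ℝ, x ^ 2 * rexp (-b * x ^ 2)
      = 2 * ∫ x in Set.Ioi (0 : ℝ), x ^ 2 * rexp (-b * x ^ 2) := by
    rw [← integral_comp_abs (f := fun x => x ^ 2 * rexp (-b * x ^ 2))]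
    congr 1 with x
    rw [sq_abs]
  rw [habs, hIoi]
  field_simp
open MeasureTheory Real Filter Topology ProbabilityTheory
open scoped NNReal ENNReal

variable {v : ℝ≥0}

lemma my_pdf_eq (hv : v ≠ 0) (x : ℝ) :
    gaussianPDFReal 0 v x = (√(2 * π * v))⁻¹ * rexp (-(2 * (v : ℝ))⁻¹ * x ^ 2) := by
  have hv0 : (0 : ℝ) < v := by positivity
  rw [gaussianPDFReal, sub_zero]
  congr 1
  field_simp

lemma my_integral_gauss (hv : v ≠ 0) (g : ℝ → ℝ) :
    ∫ x, g x ∂(gaussianReal 0 v) = ∫ x, gaussianPDFReal 0 v x * g x := by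
  rw [gaussianReal_of_var_ne_zero 0 hv, gaussianPDF_def]
  have : (fun x => ENNReal.ofReal (gaussianPDFReal 0 v x))
      = fun x => ((gaussianPDFReal 0 v x).toNNReal : ℝ≥0∞) := rfl
  rw [this, integral_withDensity_eq_integral_smul
    ((measurable_gaussianPDFReal 0 v).real_toNNReal) g]
  congr 1 with x
  rw [NNReal.smul_def, Real.coe_toNNReal _ (gaussianPDFReal_nonneg 0 v x), smul_eq_mul]

lemma my_integrable_gauss (hv : v ≠ 0) {g : ℝ → ℝ}
    (hg : Integrable (fun x => gaussianPDFReal 0 v x * g x)) :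
    Integrable g (gaussianReal 0 v) := by
  rw [gaussianReal_of_var_ne_zero 0 hv, gaussianPDF_def]
  have : (fun x => ENNReal.ofReal (gaussianPDFReal 0 v x))
      = fun x => ((gaussianPDFReal 0 v x).toNNReal : ℝ≥0∞) := rfl
  rw [this, integrable_withDensity_iff_integrable_smul
    ((measurable_gaussianPDFReal 0 v).real_toNNReal)]
  refine hg.congr ?_
  refine Filter.Eventually.of_forall fun x => ?_
  show gaussianPDFReal 0 v x * g x = (gaussianPDFReal 0 v x).toNNReal • g x
  rw [NNReal.smul_def, Real.coe_toNNReal _ (gaussianPDFReal_nonneg 0 v x), smul_eq_mul]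

lemma my_gauss_integrable_id (hv : v ≠ 0) : Integrable (fun x => x) (gaussianReal 0 v) := by
  have hv0 : (0 : ℝ) < v := by positivity
  have hb : (0 : ℝ) < (2 * (v : ℝ))⁻¹ := by positivity
  refine my_integrable_gauss hv ?_
  have h := (integrable_mul_exp_neg_mul_sq hb).const_mul (√(2 * π * v))⁻¹
  refine h.congr (Filter.Eventually.of_forall fun x => ?_)
  simp only [my_pdf_eq hv]
  ring

lemma my_gauss_integral_id (hv : v ≠ 0) : ∫ x, x ∂(gaussianReal 0 v) = 0 := by
  rw [my_integral_gauss hv]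
  have : (fun x => gaussianPDFReal 0 v x * x)
      = fun x => (√(2 * π * v))⁻¹ * (x * rexp (-(2 * (v : ℝ))⁻¹ * x ^ 2)) := by
    funext x; rw [my_pdf_eq hv]; ring
  rw [this, integral_const_mul, my_integral_odd_gauss, mul_zero]

lemma my_gauss_integrable_sq (hv : v ≠ 0) :
    Integrable (fun x => x ^ 2) (gaussianReal 0 v) := by
  have hv0 : (0 : ℝ) < v := by positivity
  have hb : (0 : ℝ) < (2 * (v : ℝ))⁻¹ := by positivity
  refine my_integrable_gauss hv ?_
  have h := (my_integrable_sq_exp hb).const_mul (√(2 * π * v))⁻¹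
  refine h.congr (Filter.Eventually.of_forall fun x => ?_)
  simp only [my_pdf_eq hv]
  ring

lemma my_gauss_integral_sq (hv : v ≠ 0) : ∫ x, x ^ 2 ∂(gaussianReal 0 v) = v := by
  have hv0 : (0 : ℝ) < v := by positivity
  have hb : (0 : ℝ) < (2 * (v : ℝ))⁻¹ := by positivity
  rw [my_integral_gauss hv]
  have : (fun x => gaussianPDFReal 0 v x * x ^ 2)
      = fun x => (√(2 * π * v))⁻¹ * (x ^ 2 * rexp (-(2 * (v : ℝ))⁻¹ * x ^ 2)) := by
    funext x; rw [my_pdf_eq hv]; ring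
  rw [this, integral_const_mul, my_integral_sq_exp hb]
  have h1 : π / (2 * (v : ℝ))⁻¹ = 2 * π * v := by field_simp
  rw [h1]
  have hs : (0 : ℝ) < √(2 * π * v) := Real.sqrt_pos.mpr (by positivity)
  field_simp

noncomputable def cirF (κ σ α : ℝ) (h : ℕ → ℝ) (x₀ : ℝ) : (n : ℕ) → (Fin n → ℝ) → ℝ
  | 0, _ => x₀
  | n + 1, v => Real.exp (-κ * h (n + 1)) *
      (Real.sqrt (cirF κ σ α h x₀ n (fun i => v i.castSucc) + 2 * α * h (n + 1))
        + σ / 2 * v (Fin.last n)) ^ 2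

lemma cirF_measurable (κ σ α : ℝ) (h : ℕ → ℝ) (x₀ : ℝ) :
    ∀ n, Measurable (cirF κ σ α h x₀ n) := by
  intro n
  induction n with
  | zero => exact measurable_const
  | succ n ih =>
    have h1 : Measurable fun v : Fin (n + 1) → ℝ =>
        cirF κ σ α h x₀ n (fun i => v i.castSucc) :=
      ih.comp (measurable_pi_lambda _ fun i => measurable_pi_apply _)
    exact (((Real.continuous_sqrt.measurable.comp (h1.add_const _)).add
      ((measurable_pi_apply _).const_mul _)).pow_const 2).const_mul _

/-- Uniform moment bound (deterministic-mesh case of Theorem 4.1) for the CIR splitting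
scheme: with `α = (4κθ − σ²)/8 ≥ 0`, step sizes `h(1), …, h(N)` summing to at most `T`,
`ξ_n ~ N(0, h(n+1))` independent, and
`X_{n+1} = e^{−κh(n+1)}(√(X_n + 2αh(n+1)) + (σ/2)ξ_n)²`, every `X_n` with `n ≤ N` is
nonnegative and integrable and satisfies `E[X_n] ≤ x₀ + κθT`. -/
theorem splitting_scheme_uniform_moment_bound
    {Ω : Type*} [MeasurableSpace Ω] (μ : Measure Ω) [IsProbabilityMeasure μ]
    (κ θ σ α : ℝ) (hκ : 0 < κ) (hθ : 0 < θ) (hσ : 0 < σ)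
    (hα : α = (4 * κ * θ - σ ^ 2) / 8) (hα0 : 0 ≤ α)
    (T : ℝ) (hT : 0 < T) (N : ℕ) (h : ℕ → ℝ) (hh : ∀ n, 0 < h n)
    (hsum : ∑ i ∈ Finset.Icc 1 N, h i ≤ T)
    (ξ : ℕ → Ω → ℝ) (hξ_meas : ∀ n, Measurable (ξ n))
    (hξ_indep : iIndepFun ξ μ)
    (hξ_law : ∀ n, Measure.map (ξ n) μ = gaussianReal 0 (h (n + 1)).toNNReal)
    (x₀ : ℝ) (hx₀ : 0 ≤ x₀)
    (X : ℕ → Ω → ℝ) (hX0 : ∀ ω, X 0 ω = x₀)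
    (hXrec : ∀ n ω, X (n + 1) ω =
      Real.exp (-κ * h (n + 1)) *
        (Real.sqrt (X n ω + 2 * α * h (n + 1)) + σ / 2 * ξ n ω) ^ 2) :
    ∀ n ≤ N, (∀ ω, 0 ≤ X n ω) ∧ Integrable (X n) μ ∧
      ∫ ω, X n ω ∂μ ≤ x₀ + κ * θ * T := by
  -- representation of X n as a measurable function of ξ 0, …, ξ (n-1)
  have hXeq : ∀ n ω, X n ω = cirF κ σ α h x₀ n (fun i => ξ i ω) := by
    intro n
    induction n with
    | zero => intro ω; rw [hX0 ω]; rfl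
    | succ n ih =>
      intro ω
      rw [hXrec n ω]
      show _ = Real.exp (-κ * h (n + 1)) *
        (Real.sqrt (cirF κ σ α h x₀ n (fun i => ξ i.castSucc ω) + 2 * α * h (n + 1))
          + σ / 2 * ξ (Fin.last n) ω) ^ 2
      have h1 : (fun i : Fin n => ξ (i.castSucc : ℕ) ω) = fun i : Fin n => ξ i ω := by
        funext i; simp
      rw [h1, ← ih ω]
      rfl
  have hXm : ∀ n, Measurable (X n) := by
    intro n
    have : X n = fun ω => cirF κ σ α h x₀ n (fun i => ξ i ω) := funext (hXeq n)
    rw [this]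
    exact (cirF_measurable κ σ α h x₀ n).comp (measurable_pi_lambda _ fun i => hξ_meas i)
  -- independence of X n and ξ n
  have hind : ∀ n, IndepFun (X n) (ξ n) μ := by
    intro n
    have hdisj : Disjoint (Finset.range n) ({n} : Finset ℕ) := by simp
    have hbase := hξ_indep.indepFun_finset (Finset.range n) {n} hdisj hξ_meas
    set φ : (↥(Finset.range n) → ℝ) → ℝ := fun v =>
      cirF κ σ α h x₀ n (fun i => v ⟨(i : ℕ), Finset.mem_range.mpr i.isLt⟩) with hφdef
    have hφ : Measurable φ := by
      apply (cirF_measurable κ σ α h x₀ n).comp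
      exact measurable_pi_lambda _ fun i => measurable_pi_apply _
    set ψ : (↥({n} : Finset ℕ) → ℝ) → ℝ := fun v =>
      v ⟨n, Finset.mem_singleton_self n⟩ with hψdef
    have hψ : Measurable ψ := measurable_pi_apply _
    have hcomp := hbase.comp hφ hψ
    have h1 : (φ ∘ fun ω (i : ↥(Finset.range n)) => ξ i ω) = X n := by
      funext ω
      exact (hXeq n ω).symm
    have h2 : (ψ ∘ fun ω (i : ↥({n} : Finset ℕ)) => ξ i ω) = ξ n := rfl
    rwa [h1, h2] at hcomp
  -- Gaussian moment facts for ξ n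
  have hvne : ∀ n, (h (n + 1)).toNNReal ≠ 0 := by
    intro n
    simp only [ne_eq, Real.toNNReal_eq_zero, not_le]
    exact hh (n + 1)
  have hξint : ∀ n, Integrable (ξ n) μ := by
    intro n
    have h1 : Integrable (fun x : ℝ => x) (Measure.map (ξ n) μ) := by
      rw [hξ_law n]; exact my_gauss_integrable_id (hvne n)
    exact (integrable_map_measure aestronglyMeasurable_id (hξ_meas n).aemeasurable).mp h1
  have hξmean : ∀ n, ∫ ω, ξ n ω ∂μ = 0 := by
    intro n
    have h1 := integral_map (μ := μ) (hξ_meas n).aemeasurable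
      (f := fun x : ℝ => x) measurable_id.aestronglyMeasurable
    rw [hξ_law n] at h1
    rw [← h1, my_gauss_integral_id (hvne n)]
  have hξsqint : ∀ n, Integrable (fun ω => ξ n ω ^ 2) μ := by
    intro n
    have h1 : Integrable (fun x : ℝ => x ^ 2) (Measure.map (ξ n) μ) := by
      rw [hξ_law n]; exact my_gauss_integrable_sq (hvne n)
    exact (integrable_map_measure (measurable_id.pow_const 2).aestronglyMeasurable
      (hξ_meas n).aemeasurable).mp h1
  have hξsqmean : ∀ n, ∫ ω, ξ n ω ^ 2 ∂μ = h (n + 1) := by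
    intro n
    have h1 := integral_map (μ := μ) (hξ_meas n).aemeasurable
      (f := fun x : ℝ => x ^ 2) (measurable_id.pow_const 2).aestronglyMeasurable
    rw [hξ_law n] at h1
    rw [← h1, my_gauss_integral_sq (hvne n), Real.coe_toNNReal _ (hh (n + 1)).le]
  -- main induction
  have hκθ : 0 ≤ κ * θ := by positivity
  have key : ∀ n, (∀ ω, 0 ≤ X n ω) ∧ Integrable (X n) μ ∧
      ∫ ω, X n ω ∂μ ≤ x₀ + κ * θ * ∑ i ∈ Finset.Icc 1 n, h i := by
    intro n
    induction n with
    | zero =>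
      refine ⟨fun ω => by rw [hX0 ω]; exact hx₀, ?_, ?_⟩
      · have : X 0 = fun _ => x₀ := funext hX0
        rw [this]; exact integrable_const x₀
      · have : X 0 = fun _ => x₀ := funext hX0
        rw [this]
        simp
    | succ n ih =>
      obtain ⟨hpos, hint, hbound⟩ := ih
      have hc : (0 : ℝ) ≤ 2 * α * h (n + 1) := by
        have := (hh (n + 1)).le; positivity
      have he0 : (0 : ℝ) < Real.exp (-κ * h (n + 1)) := Real.exp_pos _
      have he1 : Real.exp (-κ * h (n + 1)) ≤ 1 := by
        rw [Real.exp_le_one_iff]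
        nlinarith [hh (n + 1), hκ]
      set c : ℝ := 2 * α * h (n + 1) with hcdef
      set Y : Ω → ℝ := fun ω => Real.sqrt (X n ω + c) with hYdef
      have hYm : Measurable Y :=
        Real.continuous_sqrt.measurable.comp ((hXm n).add_const c)
      have hXc : ∀ ω, 0 ≤ X n ω + c := fun ω => add_nonneg (hpos ω) hc
      have hYsq : ∀ ω, Y ω ^ 2 = X n ω + c := fun ω => Real.sq_sqrt (hXc ω)
      have hYnn : ∀ ω, 0 ≤ Y ω := fun ω => Real.sqrt_nonneg _
      have hYint : Integrable Y μ := by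
        refine Integrable.mono' ((integrable_const (1 : ℝ)).add (hint.add (integrable_const c)))
          hYm.aestronglyMeasurable (Filter.Eventually.of_forall fun ω => ?_)
        rw [Real.norm_eq_abs, abs_of_nonneg (hYnn ω)]
        have h1 := hYsq ω
        have h2 := hYnn ω
        have h3 := sq_nonneg (Y ω - 1)
        show Y ω ≤ 1 + (X n ω + c)
        nlinarith
      have hindY : IndepFun Y (ξ n) μ := by
        have := (hind n).comp (φ := fun x : ℝ => Real.sqrt (x + c))
          (ψ := id) (Real.continuous_sqrt.measurable.comp (measurable_id.add_const c))
          measurable_id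
        exact this
      have hYξint : Integrable (fun ω => Y ω * ξ n ω) μ :=
        hindY.integrable_mul hYint (hξint n)
      have hYξmean : ∫ ω, Y ω * ξ n ω ∂μ = 0 := by
        have h1 := hindY.integral_mul_eq_mul_integral hYint.aestronglyMeasurable
          (hξint n).aestronglyMeasurable
        have h2 : ∫ ω, Y ω * ξ n ω ∂μ = ∫ ω, (Y * ξ n) ω ∂μ := rfl
        rw [h2]
        show integral μ (Y * ξ n) = 0
        rw [h1, hξmean n, mul_zero]
      have hXrw : X (n + 1) = fun ω => Real.exp (-κ * h (n + 1)) *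
          ((X n ω + c) + σ * (Y ω * ξ n ω) + σ ^ 2 / 4 * ξ n ω ^ 2) := by
        funext ω
        rw [hXrec n ω, ← hcdef]
        have h1 : Real.sqrt (X n ω + c) = Y ω := rfl
        rw [h1, ← hYsq ω]
        ring
      have hintX1 : Integrable (X (n + 1)) μ := by
        rw [hXrw]
        exact (((hint.add (integrable_const c)).add (hYξint.const_mul σ)).add
          ((hξsqint n).const_mul (σ ^ 2 / 4))).const_mul _
      refine ⟨?_, hintX1, ?_⟩
      · intro ω
        rw [hXrec n ω]
        positivity
      · have hA : Integrable (fun ω => X n ω + c) μ := hint.add (integrable_const c)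
        have hB : Integrable (fun ω => σ * (Y ω * ξ n ω)) μ := hYξint.const_mul σ
        have hC : Integrable (fun ω => σ ^ 2 / 4 * ξ n ω ^ 2) μ :=
          (hξsqint n).const_mul (σ ^ 2 / 4)
        have e1 : ∫ ω, ((X n ω + c) + σ * (Y ω * ξ n ω) + σ ^ 2 / 4 * ξ n ω ^ 2) ∂μ
            = (∫ ω, ((X n ω + c) + σ * (Y ω * ξ n ω)) ∂μ)
              + ∫ ω, σ ^ 2 / 4 * ξ n ω ^ 2 ∂μ := by
          have e := integral_add (hA.add hB) hC
          simpa only [Pi.add_apply] using e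
        have e2 : ∫ ω, ((X n ω + c) + σ * (Y ω * ξ n ω)) ∂μ
            = (∫ ω, (X n ω + c) ∂μ) + ∫ ω, σ * (Y ω * ξ n ω) ∂μ := by
          have e := integral_add hA hB
          simpa only [Pi.add_apply] using e
        have e3 : ∫ ω, (X n ω + c) ∂μ = (∫ ω, X n ω ∂μ) + c := by
          have e := integral_add hint (integrable_const c)
          simp only [Pi.add_apply, integral_const, measure_univ, ENNReal.toReal_one,
            one_smul, smul_eq_mul] at e
          simpa using e
        have e4 : ∫ ω, σ * (Y ω * ξ n ω) ∂μ = 0 := by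
          rw [integral_const_mul, hYξmean, mul_zero]
        have e5 : ∫ ω, σ ^ 2 / 4 * ξ n ω ^ 2 ∂μ = σ ^ 2 / 4 * h (n + 1) := by
          rw [integral_const_mul, hξsqmean n]
        have hI1 : ∫ ω, X (n + 1) ω ∂μ = Real.exp (-κ * h (n + 1)) *
            ((∫ ω, X n ω ∂μ + c) + σ * 0 + σ ^ 2 / 4 * h (n + 1)) := by
          rw [hXrw, integral_const_mul, e1, e2, e3, e4, e5]
          ring
        have hInn : 0 ≤ ∫ ω, X n ω ∂μ := integral_nonneg hpos
        have hcsq : c + σ ^ 2 / 4 * h (n + 1) = κ * θ * h (n + 1) := by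
          rw [hcdef, hα]; ring
        have hI2 : ∫ ω, X (n + 1) ω ∂μ ≤ ∫ ω, X n ω ∂μ + κ * θ * h (n + 1) := by
          rw [hI1]
          have hb : (∫ ω, X n ω ∂μ + c) + σ * 0 + σ ^ 2 / 4 * h (n + 1)
              = ∫ ω, X n ω ∂μ + κ * θ * h (n + 1) := by
            rw [mul_zero, add_zero, add_assoc, hcsq]
          rw [hb]
          have hnn : 0 ≤ ∫ ω, X n ω ∂μ + κ * θ * h (n + 1) := by
            have := (hh (n + 1)).le
            positivity
          nlinarith
        have hsum' : ∑ i ∈ Finset.Icc 1 (n + 1), h i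
            = (∑ i ∈ Finset.Icc 1 n, h i) + h (n + 1) := by
          rw [← Finset.sum_Icc_succ_top (Nat.succ_le_succ (Nat.zero_le n))]
        rw [hsum']
        calc ∫ ω, X (n + 1) ω ∂μ ≤ ∫ ω, X n ω ∂μ + κ * θ * h (n + 1) := hI2
          _ ≤ x₀ + κ * θ * ∑ i ∈ Finset.Icc 1 n, h i + κ * θ * h (n + 1) := by linarith
          _ = x₀ + κ * θ * ((∑ i ∈ Finset.Icc 1 n, h i) + h (n + 1)) := by ring
  intro n hn
  obtain ⟨hpos, hint, hbound⟩ := key n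
  refine ⟨hpos, hint, hbound.trans ?_⟩
  have hsub : ∑ i ∈ Finset.Icc 1 n, h i ≤ ∑ i ∈ Finset.Icc 1 N, h i :=
    Finset.sum_le_sum_of_subset_of_nonneg (Finset.Icc_subset_Icc_right hn)
      fun i _ _ => (hh i).le
  have : κ * θ * ∑ i ∈ Finset.Icc 1 n, h i ≤ κ * θ * T :=
    mul_le_mul_of_nonneg_left (hsub.trans hsum) hκθ
  linarith
end

section
/- Let (Ω, F, μ) be a probability space, let G ⊆ F be a sub-σ-algebra, let κ, θ, σ > 0 with α := (4κθ − σ²)/8 ≥ 0, and let h > 0. Let x : Ω → ℝ be G-measurable, nonnegative and integrable, and let W : Ω → ℝ be independent of G with law equal to the Gaussian measure with mean 0 and variance h. Then the conditional expectation satisfies, μ-almost everywhere, E[ e^{−κh}(√(x + 2αh) + (σ/2) W)² | G ] = e^{−κh} ( x + κθ h ). -/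
open MeasureTheory ProbabilityTheory Real
open scoped NNReal ENNReal

lemma gauss_integral_smul {v : ℝ≥0} (hv : v ≠ 0) (g : ℝ → ℝ) :
    ∫ y, g y ∂(gaussianReal 0 v) = ∫ y, gaussianPDFReal 0 v y * g y := by
  rw [gaussianReal_of_var_ne_zero _ hv,
    show gaussianPDF 0 v = fun x => ((Real.toNNReal (gaussianPDFReal 0 v x) : ℝ≥0) : ℝ≥0∞) from rfl,
    integral_withDensity_eq_integral_smul ((measurable_gaussianPDFReal 0 v).real_toNNReal) g]
  congr 1; ext y
  rw [NNReal.smul_def, smul_eq_mul, Real.coe_toNNReal _ (gaussianPDFReal_nonneg 0 v y)]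

lemma gauss_integrable_iff {v : ℝ≥0} (hv : v ≠ 0) (g : ℝ → ℝ) :
    Integrable g (gaussianReal 0 v) ↔ Integrable (fun y => gaussianPDFReal 0 v y * g y) := by
  rw [gaussianReal_of_var_ne_zero _ hv,
    show gaussianPDF 0 v = fun x => ((Real.toNNReal (gaussianPDFReal 0 v x) : ℝ≥0) : ℝ≥0∞) from rfl,
    integrable_withDensity_iff_integrable_smul ((measurable_gaussianPDFReal 0 v).real_toNNReal)]
  constructor <;> intro hI <;> refine hI.congr (Filter.Eventually.of_forall fun y => ?_) <;>
    simp [NNReal.smul_def, Real.coe_toNNReal _ (gaussianPDFReal_nonneg 0 v y)]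

lemma gauss_pdf_zero (v : ℝ≥0) (y : ℝ) :
    gaussianPDFReal 0 v y = (√(2 * π * v))⁻¹ * exp (-((2 * (v:ℝ))⁻¹ * y ^ 2)) := by
  rw [gaussianPDFReal]
  congr 1
  rw [sub_zero, neg_div, div_eq_inv_mul]

lemma gauss_mean_zero (v : ℝ≥0) : ∫ y, y ∂(gaussianReal 0 v) = 0 := by
  rcases eq_or_ne v 0 with rfl | hv
  · simp
  rw [gauss_integral_smul hv]
  have h1 : ∫ y, gaussianPDFReal 0 v y * y
      = ∫ y, gaussianPDFReal 0 v (-y) * (-y) :=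
    (integral_neg_eq_self (fun y => gaussianPDFReal 0 v y * y) volume).symm
  have h2 : ∀ y : ℝ, gaussianPDFReal 0 v (-y) * (-y) = -(gaussianPDFReal 0 v y * y) := by
    intro y
    rw [gaussianPDFReal, gaussianPDFReal]
    simp only [sub_zero, neg_sq]
    ring
  simp_rw [h2, integral_neg] at h1
  linarith

lemma integrable_sq_exp {b : ℝ} (hb : 0 < b) :
    Integrable (fun y : ℝ => y ^ 2 * exp (-b * y ^ 2)) := by
  have h := integrable_rpow_mul_exp_neg_mul_sq hb (s := 2) (by norm_num)
  refine h.congr (Filter.Eventually.of_forall fun y => ?_)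
  norm_num

lemma integral_sq_exp {b : ℝ} (hb : 0 < b) :
    ∫ y : ℝ, y ^ 2 * exp (-b * y ^ 2) = b ^ (-(3:ℝ)/2) * (1/2) * Real.Gamma ((3:ℝ)/2) * 2 := by
  have hint := integrable_sq_exp hb
  have hsplit := integral_add_compl (measurableSet_Ioi (a := (0:ℝ))) hint
  rw [Set.compl_Ioi] at hsplit
  have heven : ∫ y in Set.Iic (0:ℝ), y ^ 2 * exp (-b * y ^ 2)
      = ∫ y in Set.Ioi (0:ℝ), y ^ 2 * exp (-b * y ^ 2) := by
    have h3 := integral_comp_neg_Iic (c := (0:ℝ)) (fun y => y ^ 2 * exp (-b * y ^ 2))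
    simp only [neg_sq, neg_zero, integral_Ici_eq_integral_Ioi] at h3
    exact h3
  have hIoi : ∫ y in Set.Ioi (0:ℝ), y ^ 2 * exp (-b * y ^ 2)
      = b ^ (-((2:ℝ)+1)/2) * (1/2) * Real.Gamma (((2:ℝ)+1)/2) := by
    rw [← integral_rpow_mul_exp_neg_mul_rpow (p := 2) (q := 2) (by norm_num) (by norm_num) hb]
    refine setIntegral_congr_fun measurableSet_Ioi fun y hy => ?_
    norm_num
  rw [← hsplit, heven, hIoi]
  norm_num
  ring

lemma gauss_sq {v : ℝ≥0} (hv : v ≠ 0) : ∫ y, y ^ 2 ∂(gaussianReal 0 v) = v := by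
  have hvpos : (0:ℝ) < v := lt_of_le_of_ne v.coe_nonneg (by exact_mod_cast hv.symm)
  set t : ℝ := 2 * (v:ℝ) with ht_def
  have ht : 0 < t := by positivity
  have hb : 0 < t⁻¹ := inv_pos.mpr ht
  rw [gauss_integral_smul hv]
  have hpt : ∀ y : ℝ, gaussianPDFReal 0 v y * y ^ 2
      = (√(2 * π * v))⁻¹ * (y ^ 2 * exp (-t⁻¹ * y ^ 2)) := by
    intro y; rw [gauss_pdf_zero]; rw [neg_mul]; ring
  simp_rw [hpt]
  rw [integral_const_mul, integral_sq_exp hb]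
  have hG : Real.Gamma ((3:ℝ)/2) = √π / 2 := by
    rw [show (3:ℝ)/2 = 1/2 + 1 by norm_num, Real.Gamma_add_one (by norm_num),
      Real.Gamma_one_half_eq]
    ring
  have hrw : (t⁻¹ : ℝ) ^ (-(3:ℝ)/2) = t ^ ((1:ℝ)/2) * t := by
    rw [Real.inv_rpow ht.le, show (-(3:ℝ)/2) = -((3:ℝ)/2) by ring, Real.rpow_neg ht.le, inv_inv,
      show (3:ℝ)/2 = 1/2 + 1 by norm_num, Real.rpow_add ht, Real.rpow_one]
  have hsqrt : √(2 * π * v) = √π * t ^ ((1:ℝ)/2) := by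
    rw [show 2 * π * (v:ℝ) = π * t by rw [ht_def]; ring, Real.sqrt_mul pi_pos.le,
      Real.sqrt_eq_rpow t]
  rw [hG, hrw, hsqrt]
  have htp : (0:ℝ) < t ^ ((1:ℝ)/2) := Real.rpow_pos_of_pos ht _
  have hπ : (0:ℝ) < √π := Real.sqrt_pos.mpr pi_pos
  field_simp
  rw [ht_def]

lemma gauss_int_id {v : ℝ≥0} (hv : v ≠ 0) :
    Integrable (fun y : ℝ => y) (gaussianReal 0 v) := by
  have hvpos : (0:ℝ) < v := lt_of_le_of_ne v.coe_nonneg (by exact_mod_cast hv.symm)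
  have hb : (0:ℝ) < (2 * (v:ℝ))⁻¹ := by positivity
  rw [gauss_integrable_iff hv]
  have h1 : Integrable (fun y : ℝ => y * exp (-(2 * (v:ℝ))⁻¹ * y ^ 2)) :=
    integrable_mul_exp_neg_mul_sq hb
  refine (h1.const_mul ((√(2 * π * v))⁻¹)).congr (Filter.Eventually.of_forall fun y => ?_)
  simp only [gauss_pdf_zero, neg_mul]
  ring

lemma gauss_int_sq {v : ℝ≥0} (hv : v ≠ 0) :
    Integrable (fun y : ℝ => y ^ 2) (gaussianReal 0 v) := by
  have hvpos : (0:ℝ) < v := lt_of_le_of_ne v.coe_nonneg (by exact_mod_cast hv.symm)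
  have hb : (0:ℝ) < (2 * (v:ℝ))⁻¹ := by positivity
  rw [gauss_integrable_iff hv]
  refine ((integrable_sq_exp hb).const_mul ((√(2 * π * v))⁻¹)).congr
    (Filter.Eventually.of_forall fun y => ?_)
  simp only [gauss_pdf_zero, neg_mul]
  ring


/-- One-step conditional mean identity for the CIR splitting scheme: if `x` is
`G`-measurable, nonnegative and integrable, and `W` is independent of `G` with law
`N(0, h)`, then `E[e^{−κh}(√(x + 2αh) + (σ/2)W)² | G] = e^{−κh}(x + κθh)` a.e. -/
theorem splitting_one_step_condExp
    {Ω : Type*} {F : MeasurableSpace Ω} (μ : Measure Ω) [IsProbabilityMeasure μ]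
    (G : MeasurableSpace Ω) (hG : G ≤ F)
    (κ θ σ α : ℝ) (hκ : 0 < κ) (hθ : 0 < θ) (hσ : 0 < σ)
    (hα : α = (4 * κ * θ - σ ^ 2) / 8) (hα0 : 0 ≤ α)
    (h : ℝ) (hh : 0 < h)
    (x : Ω → ℝ) (hx_meas : Measurable[G] x) (hx_nonneg : ∀ ω, 0 ≤ x ω)
    (hx_int : Integrable x μ)
    (W : Ω → ℝ) (hW_meas : Measurable[F] W)
    (hW_indep : Indep (MeasurableSpace.comap W Real.measurableSpace) G μ)
    (hW_law : @Measure.map Ω ℝ F Real.measurableSpace W μ = gaussianReal 0 h.toNNReal) :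
    μ[fun ω => Real.exp (-κ * h) * (Real.sqrt (x ω + 2 * α * h) + σ / 2 * W ω) ^ 2 | G]
      =ᵐ[μ] fun ω => Real.exp (-κ * h) * (x ω + κ * θ * h) := by
  have hv : h.toNNReal ≠ 0 := by
    simp only [ne_eq, Real.toNNReal_eq_zero, not_le]
    exact hh
  set e : ℝ := Real.exp (-κ * h) with he_def
  set s : ℝ := σ / 2 with hs_def
  set c : ℝ := 2 * α * h with hc_def
  have hc0 : 0 ≤ c := by positivity
  -- the G-measurable factor
  set f : Ω → ℝ := fun ω => Real.sqrt (x ω + c) with hf_def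
  have hf_measG : Measurable[G] f := Real.continuous_sqrt.measurable.comp (hx_meas.add_const c)
  have hf_sm : StronglyMeasurable[G] f := hf_measG.stronglyMeasurable
  have hf_sq : ∀ ω, Real.sqrt (x ω + c) ^ 2 = x ω + c := fun ω =>
    Real.sq_sqrt (add_nonneg (hx_nonneg ω) hc0)
  have hf_int : Integrable f μ := by
    refine Integrable.mono' (g := fun ω => x ω + (1 + c))
      (hx_int.add (integrable_const (1 + c))) ((hf_measG.mono hG le_rfl).aestronglyMeasurable)
      (Filter.Eventually.of_forall fun ω => ?_)
    show ‖Real.sqrt (x ω + c)‖ ≤ x ω + (1 + c)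
    rw [Real.norm_eq_abs, abs_of_nonneg (Real.sqrt_nonneg _)]
    nlinarith [Real.sq_sqrt (add_nonneg (hx_nonneg ω) hc0),
      Real.sqrt_nonneg (x ω + c), hx_nonneg ω, sq_nonneg (Real.sqrt (x ω + c) - 1)]
  -- facts about W
  have hm'le : MeasurableSpace.comap W Real.measurableSpace ≤ F := hW_meas.comap_le
  have hWm' : Measurable[MeasurableSpace.comap W Real.measurableSpace] W :=
    Measurable.of_comap_le le_rfl
  have hW_ae : AEMeasurable W μ := hW_meas.aemeasurable
  have hWint : Integrable W μ := by
    have h2 := gauss_int_id hv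
    rw [← hW_law] at h2
    exact (integrable_map_measure aestronglyMeasurable_id hW_ae).mp h2
  have hW2int : Integrable (fun ω => W ω ^ 2) μ := by
    have h2 := gauss_int_sq hv
    rw [← hW_law] at h2
    exact (integrable_map_measure ((measurable_id.pow_const 2).aestronglyMeasurable) hW_ae).mp h2
  have EW : ∫ ω, W ω ∂μ = 0 := by
    have h2 : ∫ y, (fun y : ℝ => y) y ∂(gaussianReal 0 h.toNNReal) = 0 := gauss_mean_zero _
    rw [← hW_law, integral_map hW_ae measurable_id'.aestronglyMeasurable] at h2
    exact h2
  have EW2 : ∫ ω, W ω ^ 2 ∂μ = h := by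
    have h2 : ∫ y, (fun y : ℝ => y ^ 2) y ∂(gaussianReal 0 h.toNNReal) = (h.toNNReal : ℝ) :=
      gauss_sq hv
    rw [← hW_law, integral_map hW_ae ((measurable_id'.pow_const 2).aestronglyMeasurable)] at h2
    rw [Real.coe_toNNReal _ hh.le] at h2
    exact h2
  -- independence of f and W
  have hindepfW : IndepFun f W μ :=
    indep_of_indep_of_le_left hW_indep.symm hf_measG.comap_le
  have hfW_int : Integrable (fun ω => f ω * W ω) μ := hindepfW.integrable_mul hf_int hWint
  -- conditional expectations of the three pieces
  have hceW : μ[W|G] =ᵐ[μ] fun _ => (0:ℝ) := by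
    have := condExp_indep_eq hm'le hG hWm'.stronglyMeasurable hW_indep (μ := μ)
    rwa [EW] at this
  have hceW2 : μ[fun ω => W ω ^ 2|G] =ᵐ[μ] fun _ => h := by
    have := condExp_indep_eq hm'le hG (f := fun ω => W ω ^ 2)
      (hWm'.pow_const 2).stronglyMeasurable hW_indep (μ := μ)
    rwa [EW2] at this
  -- decomposition
  set g1 : Ω → ℝ := fun ω => e * (x ω + c) with hg1_def
  set g2 : Ω → ℝ := fun ω => (2 * e * s) * (f ω * W ω) with hg2_def
  set g3 : Ω → ℝ := fun ω => (e * s ^ 2) * (W ω ^ 2) with hg3_def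
  have hg1int : Integrable g1 μ := (hx_int.add (integrable_const c)).const_mul e
  have hg2int : Integrable g2 μ := hfW_int.const_mul _
  have hg3int : Integrable g3 μ := hW2int.const_mul _
  have hg_eq : (fun ω => e * (Real.sqrt (x ω + c) + s * W ω) ^ 2) = (g1 + g2) + g3 := by
    funext ω
    simp only [Pi.add_apply, hg1_def, hg2_def, hg3_def, hf_def]
    linear_combination e * hf_sq ω
  have E1 : μ[g1|G] = g1 :=
    condExp_of_stronglyMeasurable hG
      (((hx_meas.add_const c).const_mul e).stronglyMeasurable) hg1int
  have E2 : μ[g2|G] =ᵐ[μ] fun _ => (0:ℝ) := by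
    have e2a : g2 = (2 * e * s) • (fun ω => f ω * W ω) := by
      funext ω; simp [hg2_def, smul_eq_mul]
    have step1 : μ[g2|G] =ᵐ[μ] (2 * e * s) • μ[fun ω => f ω * W ω|G] := by
      rw [e2a]; exact condExp_smul _ _ _
    have step2 : μ[fun ω => f ω * W ω|G] =ᵐ[μ] f * μ[W|G] :=
      condExp_mul_of_stronglyMeasurable_left hf_sm hfW_int hWint
    refine step1.trans ?_
    filter_upwards [step2, hceW] with ω h2 h3
    simp only [Pi.smul_apply, smul_eq_mul, h2, Pi.mul_apply, h3, mul_zero]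
  have E3 : μ[g3|G] =ᵐ[μ] fun _ => e * s ^ 2 * h := by
    have e3a : g3 = (e * s ^ 2) • (fun ω => W ω ^ 2) := by
      funext ω; simp [hg3_def, smul_eq_mul]
    have step1 : μ[g3|G] =ᵐ[μ] (e * s ^ 2) • μ[fun ω => W ω ^ 2|G] := by
      rw [e3a]; exact condExp_smul _ _ _
    refine step1.trans ?_
    filter_upwards [hceW2] with ω h2
    simp only [Pi.smul_apply, smul_eq_mul, h2]
  have hkey : c + s ^ 2 * h = κ * θ * h := by
    rw [hc_def, hs_def, hα]; ring
  calc μ[fun ω => e * (Real.sqrt (x ω + c) + s * W ω) ^ 2|G]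
      = μ[(g1 + g2) + g3|G] := by rw [hg_eq]
    _ =ᵐ[μ] μ[g1 + g2|G] + μ[g3|G] := condExp_add (hg1int.add hg2int) hg3int _
    _ =ᵐ[μ] (μ[g1|G] + μ[g2|G]) + μ[g3|G] :=
        (condExp_add hg1int hg2int _).add (Filter.EventuallyEq.refl _ _)
    _ =ᵐ[μ] fun ω => e * (x ω + κ * θ * h) := by
        rw [E1]
        filter_upwards [E2, E3] with ω h2 h3
        simp only [Pi.add_apply, h2, h3, hg1_def, add_zero]
        linear_combination e * hkey
end
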